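/- arXiv:1207.1113 — 2 statements merged into one kernel-verified Lean document; each statement's English description precedes it below -/
import Mathlib

section
/- Let θ : [0,∞) → ℝ be differentiable and satisfy the Raychaudhuri-type equation θ'(t) + (1/(n-2)) θ(t)² = f(t) for all t ≥ 0, where n ≥ 3 is an integer, f : [0,∞) → ℝ is continuous with f(t) ≤ 0 for all t, and θ(0) ≤ 0. If limsup_{s→∞} ( θ(s) + (1/(n-2)) ∫₀ˢ θ(t)² dt ) ≥ 0, then θ ≡ 0 and f ≡ 0 on [0,∞). -/
open Filter MeasureTheory

/-- Analytic core of the singularity theorem: traced Riccati (Raychaudhuri)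
equation along a complete null Σ-ray. -/
theorem raychaudhuri_limsup_forces_vanishing
    (n : ℕ) (hn : 3 ≤ n)
    (θ θ' f : ℝ → ℝ)
    (hθ : ∀ t, 0 ≤ t → HasDerivAt θ (θ' t) t)
    (hf_cont : ContinuousOn f (Set.Ici 0))
    (hf_nonpos : ∀ t, 0 ≤ t → f t ≤ 0)
    (heq : ∀ t, 0 ≤ t → θ' t + (1 / ((n : ℝ) - 2)) * (θ t) ^ 2 = f t)
    (hθ0 : θ 0 ≤ 0)
    (hlimsup :
      0 ≤ Filter.limsup
        (fun s => θ s + (1 / ((n : ℝ) - 2)) * ∫ t in (0:ℝ)..s, (θ t) ^ 2)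
        Filter.atTop) :
    (∀ t, 0 ≤ t → θ t = 0) ∧ (∀ t, 0 ≤ t → f t = 0) := by
  set c : ℝ := 1 / ((n : ℝ) - 2) with hc_def
  have hn2 : (1 : ℝ) ≤ (n : ℝ) - 2 := by
    have : (3 : ℝ) ≤ (n : ℝ) := by exact_mod_cast hn
    linarith
  have hc : 0 < c := by
    rw [hc_def]
    positivity
  -- θ' ≤ 0 on [0, ∞)
  have hθ'_nonpos : ∀ t, 0 ≤ t → θ' t ≤ 0 := by
    intro t ht
    have h1 := heq t ht
    have h2 := hf_nonpos t ht
    nlinarith [sq_nonneg (θ t), mul_nonneg hc.le (sq_nonneg (θ t))]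
  -- θ is antitone on [0, ∞)
  have hθ_anti : AntitoneOn θ (Set.Ici 0) := by
    apply antitoneOn_of_deriv_nonpos (convex_Ici 0)
    · intro t ht
      exact (hθ t ht).continuousAt.continuousWithinAt
    · intro t ht
      rw [interior_Ici] at ht
      exact (hθ t (le_of_lt ht)).differentiableAt.differentiableWithinAt
    · intro t ht
      rw [interior_Ici] at ht
      rw [(hθ t (le_of_lt ht)).deriv]
      exact hθ'_nonpos t (le_of_lt ht)
  have hθ_nonpos : ∀ t, 0 ≤ t → θ t ≤ 0 :=
    fun t ht => le_trans (hθ_anti Set.self_mem_Ici ht ht) hθ0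
  -- θ never strictly negative (else Riccati blow-up contradiction)
  have hθ_zero : ∀ t, 0 ≤ t → θ t = 0 := by
    intro t₀ ht₀
    by_contra hne
    have hθt₀ : θ t₀ < 0 := lt_of_le_of_ne (hθ_nonpos t₀ ht₀) hne
    -- θ t ≤ θ t₀ < 0 for t ≥ t₀
    have hθneg : ∀ t, t₀ ≤ t → θ t < 0 := by
      intro t ht
      exact lt_of_le_of_lt (hθ_anti (Set.mem_Ici.mpr ht₀)
        (Set.mem_Ici.mpr (le_trans ht₀ ht)) ht) hθt₀
    set w : ℝ → ℝ := fun t => (θ t)⁻¹ - c * t with hw_def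
    have hw_deriv : ∀ t, t₀ ≤ t →
        HasDerivAt w (-θ' t / θ t ^ 2 - c) t := by
      intro t ht
      have h0 : (0:ℝ) ≤ t := le_trans ht₀ ht
      have hne' : θ t ≠ 0 := (hθneg t ht).ne
      have h1 : HasDerivAt (fun s => (θ s)⁻¹) (-θ' t / θ t ^ 2) t :=
        (hθ t h0).inv hne'
      have h2 : HasDerivAt (fun s => c * s) c t := by
        simpa using (hasDerivAt_id t).const_mul c
      exact h1.sub h2
    have hw_deriv_val : ∀ t, t₀ ≤ t →
        -θ' t / θ t ^ 2 - c = -f t / θ t ^ 2 := by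
      intro t ht
      have h0 : (0:ℝ) ≤ t := le_trans ht₀ ht
      have hne' : θ t ≠ 0 := (hθneg t ht).ne
      have h1 : θ' t = f t - c * θ t ^ 2 := by
        have := heq t h0; linarith
      rw [h1]
      field_simp
      ring
    have hw_mono : MonotoneOn w (Set.Ici t₀) := by
      apply monotoneOn_of_deriv_nonneg (convex_Ici t₀)
      · intro t ht
        exact (hw_deriv t ht).continuousAt.continuousWithinAt
      · intro t ht
        rw [interior_Ici] at ht
        exact (hw_deriv t ht.le).differentiableAt.differentiableWithinAt
      · intro t ht
        rw [interior_Ici] at ht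
        rw [(hw_deriv t ht.le).deriv, hw_deriv_val t ht.le]
        apply div_nonneg
        · linarith [hf_nonpos t (le_trans ht₀ ht.le)]
        · positivity
    -- pick a time where 1/θ would have to be positive
    set T : ℝ := t₀ + (1 - (θ t₀)⁻¹) / c with hT_def
    have hinv_neg : (θ t₀)⁻¹ < 0 := inv_neg''.mpr hθt₀
    have hT : t₀ ≤ T := by
      have h : 0 ≤ (1 - (θ t₀)⁻¹) / c := by
        apply div_nonneg _ hc.le; linarith
      rw [hT_def]; linarith
    have hwT : w t₀ ≤ w T := hw_mono Set.self_mem_Ici (Set.mem_Ici.mpr hT) hT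
    have hTval : w T = (θ T)⁻¹ - c * t₀ - (1 - (θ t₀)⁻¹) := by
      rw [hw_def]
      simp only [hT_def]
      field_simp
      ring
    have hinvT_neg : (θ T)⁻¹ < 0 := inv_neg''.mpr (hθneg T hT)
    have : w t₀ = (θ t₀)⁻¹ - c * t₀ := rfl
    rw [this, hTval] at hwT
    linarith
  refine ⟨hθ_zero, ?_⟩
  -- f = 0 on (0, ∞) since θ ≡ 0 there, then at 0 by continuity
  have hf_pos : ∀ t, 0 < t → f t = 0 := by
    intro t ht
    have hθ'0 : θ' t = 0 := by
      have hconst : ∀ᶠ s in nhds t, θ s = 0 := by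
        filter_upwards [Ioi_mem_nhds ht] with s hs
        exact hθ_zero s (le_of_lt hs)
      have h0 : HasDerivAt θ 0 t := by
        have : HasDerivAt (fun _ : ℝ => (0:ℝ)) 0 t := hasDerivAt_const t 0
        exact this.congr_of_eventuallyEq hconst
      exact HasDerivAt.unique (hθ t ht.le) h0
    have := heq t ht.le
    rw [hθ'0, hθ_zero t ht.le] at this
    simpa using this.symm
  intro t ht
  rcases eq_or_lt_of_le ht with h | h
  · -- t = 0 : use continuity within Ici 0
    subst h
    have h1 : Filter.Tendsto f (nhdsWithin 0 (Set.Ioi 0)) (nhds (f 0)) :=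
      (hf_cont 0 Set.self_mem_Ici).mono_left (nhdsWithin_mono _ Set.Ioi_subset_Ici_self)
    have h2 : Filter.Tendsto f (nhdsWithin 0 (Set.Ioi 0)) (nhds 0) := by
      apply Filter.Tendsto.congr' _ tendsto_const_nhds
      filter_upwards [self_mem_nhdsWithin] with s hs
      exact (hf_pos s hs).symm
    exact tendsto_nhds_unique h1 h2
  · exact hf_pos t h
end

section
/- Let θ : [0,∞) → ℝ be continuously differentiable with θ' + c θ² ≤ 0 for some constant c > 0 and θ(0) = 0. Suppose additionally θ'(t₀) < 0 at some t₀ ≥ 0. Then θ(t) < 0 for all t > t₀, and θ blows up to -∞ in finite time, contradicting existence on [0,∞). -/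
/-- Generic condition argument: if the expansion starts at zero and its
derivative is ever strictly negative, the Raychaudhuri inequality forces
finite-time blow-up, contradicting existence on all of `[0,∞)`. -/
theorem generic_condition_blowup
    (c : ℝ) (hc : 0 < c)
    (θ θ' : ℝ → ℝ)
    (hθ : ∀ t, 0 ≤ t → HasDerivAt θ (θ' t) t)
    (hθ'cont : ContinuousOn θ' (Set.Ici 0))
    (hineq : ∀ t, 0 ≤ t → θ' t + c * (θ t) ^ 2 ≤ 0)
    (hθ0 : θ 0 = 0)
    (t₀ : ℝ) (ht₀ : 0 ≤ t₀) (hneg : θ' t₀ < 0) :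
    (∀ t, t₀ < t → θ t < 0) ∧ False := by
  -- θ' is nonpositive on [0, ∞)
  have hθ'le : ∀ t, 0 ≤ t → θ' t ≤ 0 := by
    intro t ht
    nlinarith [hineq t ht, sq_nonneg (θ t)]
  -- θ is antitone on [0, ∞)
  have hanti : AntitoneOn θ (Set.Ici 0) := by
    apply antitoneOn_of_hasDerivWithinAt_nonpos (convex_Ici 0)
      (f' := θ')
    · intro x hx
      exact (hθ x hx).continuousAt.continuousWithinAt
    · intro x hx
      rw [interior_Ici] at hx
      exact ((hθ x hx.le).hasDerivWithinAt)
    · intro x hx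
      rw [interior_Ici] at hx
      exact hθ'le x hx.le
  have hθt₀ : θ t₀ ≤ 0 := by
    have := hanti (Set.self_mem_Ici) (Set.mem_Ici.mpr ht₀) ht₀
    rwa [hθ0] at this
  -- Part 1: θ is negative after t₀
  have hpart1 : ∀ t, t₀ < t → θ t < 0 := by
    intro t ht
    have ht' : (0:ℝ) ≤ t := le_trans ht₀ ht.le
    have hle : θ t ≤ θ t₀ := hanti (Set.mem_Ici.mpr ht₀) (Set.mem_Ici.mpr ht') ht.le
    rcases lt_or_eq_of_le (le_trans hle hθt₀) with h | h
    · exact h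
    -- θ t = 0 : then θ is identically 0 on [t₀, t], forcing θ' t₀ = 0
    exfalso
    have hzero : ∀ s, t₀ ≤ s → s ≤ t → θ s = 0 := by
      intro s hs1 hs2
      have h1 : θ t ≤ θ s :=
        hanti (Set.mem_Ici.mpr (le_trans ht₀ hs1)) (Set.mem_Ici.mpr ht') hs2
      have h2 : θ s ≤ θ t₀ := hanti (Set.mem_Ici.mpr ht₀)
        (Set.mem_Ici.mpr (le_trans ht₀ hs1)) hs1
      rw [h] at h1
      linarith
    have hd1 : HasDerivWithinAt θ (θ' t₀) (Set.Ici t₀) t₀ :=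
      (hθ t₀ ht₀).hasDerivWithinAt
    have hEq : θ =ᶠ[nhdsWithin t₀ (Set.Ici t₀)] fun _ => (0:ℝ) := by
      have h1 : ∀ᶠ x in nhdsWithin t₀ (Set.Ici t₀), x ∈ Set.Iio t :=
        eventually_nhdsWithin_of_eventually_nhds (Iio_mem_nhds ht)
      filter_upwards [h1, eventually_mem_nhdsWithin] with x hx1 hx2
      exact hzero x hx2 (le_of_lt hx1)
    have hd0 : HasDerivWithinAt θ 0 (Set.Ici t₀) t₀ := by
      have : HasDerivWithinAt (fun _ : ℝ => (0:ℝ)) 0 (Set.Ici t₀) t₀ :=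
        (hasDerivAt_const t₀ (0:ℝ)).hasDerivWithinAt
      exact this.congr_of_eventuallyEq hEq (hzero t₀ le_rfl ht.le)
    have := (uniqueDiffOn_Ici t₀ t₀ Set.self_mem_Ici).eq_deriv _ hd1 hd0
    exact absurd this (ne_of_lt hneg)
  refine ⟨hpart1, ?_⟩
  -- Part 2: blow-up
  set t₁ : ℝ := t₀ + 1 with ht₁def
  have ht₁ : t₀ < t₁ := by linarith
  have ht₁0 : (0:ℝ) ≤ t₁ := by linarith
  have hθt₁ : θ t₁ < 0 := hpart1 t₁ ht₁
  set b : ℝ := (θ t₁)⁻¹ with hbdef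
  have hb : b < 0 := inv_neg''.mpr hθt₁
  -- g t = 1/θ t - c t is monotone on [t₁, ∞)
  set g : ℝ → ℝ := fun t => (θ t)⁻¹ - c * t with hgdef
  have hgd : ∀ x, t₁ ≤ x → HasDerivAt g (-θ' x / θ x ^ 2 - c) x := by
    intro x hx
    have hx0 : (0:ℝ) ≤ x := le_trans ht₁0 hx
    have hxne : θ x ≠ 0 := ne_of_lt (hpart1 x (lt_of_lt_of_le ht₁ hx))
    have h1 : HasDerivAt (fun t => (θ t)⁻¹) (-θ' x / θ x ^ 2) x :=
      (hθ x hx0).inv hxne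
    have h2 : HasDerivAt (fun t : ℝ => c * t) c x := by
      simpa using (hasDerivAt_id x).const_mul c
    exact h1.sub h2
  have hmono : MonotoneOn g (Set.Ici t₁) := by
    apply monotoneOn_of_hasDerivWithinAt_nonneg (convex_Ici t₁)
      (f' := fun x => -θ' x / θ x ^ 2 - c)
    · intro x hx
      exact (hgd x hx).continuousAt.continuousWithinAt
    · intro x hx
      rw [interior_Ici] at hx
      exact (hgd x hx.le).hasDerivWithinAt
    · intro x hx
      rw [interior_Ici] at hx
      have hx0 : (0:ℝ) ≤ x := le_trans ht₁0 hx.le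
      have hxlt : θ x < 0 := hpart1 x (lt_trans ht₁ hx)
      have hsq : 0 < θ x ^ 2 := by nlinarith [hxlt]
      have : c ≤ -θ' x / θ x ^ 2 := by
        rw [le_div_iff₀ hsq]
        nlinarith [hineq x hx0]
      linarith
  -- choose T large enough
  set T : ℝ := t₁ + (1 - b) / c with hTdef
  have hT : t₁ ≤ T :=
    le_add_of_nonneg_right (div_nonneg (by linarith) hc.le)
  have hmle : g t₁ ≤ g T := hmono Set.self_mem_Ici (Set.mem_Ici.mpr hT) hT
  have hθT : θ T < 0 := hpart1 T (lt_of_lt_of_le ht₁ hT)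
  have hinvT : (θ T)⁻¹ < 0 := inv_neg''.mpr hθT
  have hcT : c * T = c * t₁ + (1 - b) := by
    field_simp [hTdef]
    rw [hTdef, mul_add, mul_div_assoc', mul_div_cancel_left₀ _ hc.ne']
  simp only [hgdef] at hmle
  rw [hcT] at hmle
  -- g t₁ ≤ g T gives b - c t₁ ≤ (θ T)⁻¹ - c t₁ - (1 - b), i.e. 1 ≤ (θ T)⁻¹
  linarith
end
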